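/- The q-binomial sums S_n = Σ_{k=0}^{⌊n/2⌋} (−1)^k q^{k(k−1)/2} [n−k choose k]_q satisfy, for every integer n ≥ 2, the second-order recurrence S_n = q^{⌊n/3⌋} S_{n−1} − q^{⌊2n/3⌋−1} S_{n−2} in the polynomial ring ℤ[q]. -/

import Mathlib

/-- The Gaussian (q-)binomial coefficient `[n choose k]_q ∈ ℤ[q]`, defined through the
q-Pascal recurrence `[n+1 choose k+1] = [n choose k] + q^{k+1} [n choose k+1]`. -/
noncomputable def qBinom : ℕ → ℕ → Polynomial ℤ
  | _, 0 => 1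
  | 0, _ + 1 => 0
  | n + 1, k + 1 => qBinom n k + Polynomial.X ^ (k + 1) * qBinom n (k + 1)

/-- `S_n = ∑_{k=0}^{⌊n/2⌋} (-1)^k q^{k(k-1)/2} [n-k choose k]_q ∈ ℤ[q]`. -/
noncomputable def qBinomSum (n : ℕ) : Polynomial ℤ :=
  ∑ k ∈ Finset.range (n / 2 + 1),
    (-1) ^ k * Polynomial.X ^ (k * (k - 1) / 2) * qBinom (n - k) k

lemma qBinom_succ_succ (n k : ℕ) : qBinom (n+1) (k+1) = qBinom n k + Polynomial.X ^ (k + 1) * qBinom n (k + 1) := rfl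
lemma qBinom_zero (n : ℕ) : qBinom n 0 = 1 := by cases n <;> rfl

lemma qBinom_eq_zero : ∀ n k, n < k → qBinom n k = 0 := by
  intro n
  induction n with
  | zero => intro k h; cases k with | zero => omega | succ j => rfl
  | succ m ih =>
    intro k h
    cases k with
    | zero => omega
    | succ j =>
      rw [qBinom_succ_succ, ih j (by omega), ih (j+1) (by omega)]
      ring

lemma pascal2 : ∀ n k, qBinom (n+1) (k+1) =
    Polynomial.X ^ (n - k) * qBinom n k + qBinom n (k+1) := by
  intro n
  induction n with
  | zero =>
    intro k
    cases k with
    | zero => simp [qBinom]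
    | succ j => simp [qBinom_succ_succ, qBinom_eq_zero 0 (j+1) (by omega),
        qBinom_eq_zero 0 (j+2) (by omega), qBinom_eq_zero 1 (j+2) (by omega)]
  | succ n ih =>
    intro k
    rcases le_or_gt k n with hk | hk
    · cases k with
      | zero =>
        have d1 := qBinom_succ_succ n 0
        have i1 := ih 0
        rw [qBinom_zero] at d1 i1
        have e1 := d1.symm.trans i1
        have hp : (Polynomial.X : Polynomial ℤ) ^ (n+1-0) = Polynomial.X ^ (n-0) * Polynomial.X := by
          rw [← pow_succ]
          congr 1
        rw [qBinom_succ_succ (n+1) 0, qBinom_zero, hp, i1]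
        linear_combination e1
      | succ j =>
        have hj : j + 1 ≤ n := hk
        have d1 := qBinom_succ_succ n j
        have i1 := ih j
        have d2 := qBinom_succ_succ n (j+1)
        have i2 := ih (j+1)
        have hp1 : (Polynomial.X : Polynomial ℤ) ^ (n+1-(j+1))
            = Polynomial.X ^ (n-(j+1)) * Polynomial.X := by
          rw [← pow_succ]; congr 1; omega
        have hp3 : (Polynomial.X : Polynomial ℤ) ^ (n-j)
            = Polynomial.X ^ (n-(j+1)) * Polynomial.X := by
          rw [← pow_succ]; congr 1; omega
        rw [hp3] at i1
        have e1 := d1.symm.trans i1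
        have e2 := d2.symm.trans i2
        rw [qBinom_succ_succ (n+1) (j+1), hp1, d1, i2]
        linear_combination e1 + e2
    · rcases eq_or_lt_of_le (show n + 1 ≤ k by omega) with he | hl
      · subst he
        rw [qBinom_succ_succ (n+1) (n+1), qBinom_eq_zero (n+1) (n+1+1) (by omega),
          qBinom_succ_succ n n, qBinom_eq_zero n (n+1) (by omega), Nat.sub_self]
        ring
      · rw [qBinom_eq_zero (n+1+1) (k+1) (by omega), qBinom_eq_zero (n+1) k (by omega),
          qBinom_eq_zero (n+1) (k+1) (by omega)]
        ring

noncomputable def uSum (t : ℕ) : Polynomial ℤ :=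
  ∑ k ∈ Finset.range (t + 1),
    (-1) ^ k * Polynomial.X ^ (k * (k + 1) / 2) * qBinom (t - k) k

lemma qBinomSum_ext (n N : ℕ) (h : n / 2 + 1 ≤ N) :
    (∑ k ∈ Finset.range N,
      (-1) ^ k * Polynomial.X ^ (k * (k - 1) / 2) * qBinom (n - k) k) = qBinomSum n := by
  rw [qBinomSum]
  refine (Finset.sum_subset (Finset.range_subset_range.mpr h) ?_).symm
  intro k hk hnk
  simp only [Finset.mem_range] at hk hnk
  rw [qBinom_eq_zero (n - k) k (by omega)]
  ring

lemma uSum_ext (t N : ℕ) (h : t + 1 ≤ N) :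
    (∑ k ∈ Finset.range N,
      (-1) ^ k * Polynomial.X ^ (k * (k + 1) / 2) * qBinom (t - k) k) = uSum t := by
  rw [uSum]
  refine (Finset.sum_subset (Finset.range_subset_range.mpr h) ?_).symm
  intro k hk hnk
  simp only [Finset.mem_range] at hk hnk
  rw [qBinom_eq_zero (t - k) k (by omega)]
  ring

lemma pascal1' (m k : ℕ) (hm : 1 ≤ m) :
    qBinom (m - k) (k+1) = qBinom (m - (k+1)) k + Polynomial.X ^ (k+1) * qBinom (m - (k+1)) (k+1) := by
  rcases lt_or_ge k m with h | h
  · have h1 : m - k = (m - (k+1)) + 1 := by omega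
    rw [h1]
    exact qBinom_succ_succ _ _
  · have h0 : m - k = 0 := by omega
    have h02 : m - (k+1) = 0 := by omega
    rw [h0, h02, qBinom_eq_zero 0 (k+1) (by omega), qBinom_eq_zero 0 k (by omega)]
    ring

lemma pascal2' (m k : ℕ) (hm : 1 ≤ m) :
    qBinom (m - k) (k+1) = Polynomial.X ^ (m - (2*k+1)) * qBinom (m - (k+1)) k
      + qBinom (m - (k+1)) (k+1) := by
  rcases lt_or_ge k m with h | h
  · have h1 : m - k = (m - (k+1)) + 1 := by omega
    have h2 : (m - (k+1)) - k = m - (2*k+1) := by omega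
    rw [h1, pascal2 (m - (k+1)) k, h2]
  · have h0 : m - k = 0 := by omega
    have h02 : m - (k+1) = 0 := by omega
    rw [h0, h02, qBinom_eq_zero 0 (k+1) (by omega), qBinom_eq_zero 0 k (by omega)]
    ring

lemma tri2 (k : ℕ) : k * (k+1) / 2 + (k+1) = (k+1) * ((k+1)+1) / 2 := by
  obtain ⟨c, hc⟩ := Nat.even_mul_succ_self k
  have h : (k+1) * ((k+1)+1) = k * (k+1) + 2*(k+1) := by ring
  omega

lemma claimI (r : ℕ) : qBinomSum (r+2) = uSum (r+1) - uSum r := by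
  rw [← qBinomSum_ext (r+2) (r+3) (by omega), Finset.sum_range_succ']
  have hsplit : ∀ k ∈ Finset.range (r+2),
      (-1)^(k+1) * Polynomial.X ^ ((k+1)*((k+1)-1)/2) * qBinom ((r+2)-(k+1)) (k+1)
      = -((-1)^k * Polynomial.X ^ (k*(k+1)/2) * qBinom (r-k) k)
        + (-1)^(k+1) * Polynomial.X ^ ((k+1)*((k+1)+1)/2) * qBinom ((r+1)-(k+1)) (k+1) := by
    intro k hk
    have h1 : (r+2)-(k+1) = (r+1)-k := by omega
    rw [h1, pascal1' (r+1) k (by omega)]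
    have h2 : (r+1)-(k+1) = r - k := by omega
    have e1 : (k+1)*((k+1)-1)/2 = k*(k+1)/2 := by
      simp [Nat.mul_comm]
    rw [h2, e1, ← tri2 k, pow_add]
    ring
  rw [Finset.sum_congr rfl hsplit, Finset.sum_add_distrib]
  have hu1 : (∑ k ∈ Finset.range (r+2),
      -((-1)^k * Polynomial.X ^ (k*(k+1)/2) * qBinom (r-k) k)) = -(uSum r) := by
    rw [Finset.sum_neg_distrib, uSum_ext r (r+2) (by omega)]
  have hrs := Finset.sum_range_succ'
      (fun k => (-1)^k * Polynomial.X ^ (k*(k+1)/2) * qBinom ((r+1)-k) k) (r+2)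
  rw [uSum_ext (r+1) (r+3) (by omega)] at hrs
  have hu2 : (∑ k ∈ Finset.range (r+2),
      (-1)^(k+1) * Polynomial.X ^ ((k+1)*((k+1)+1)/2) * qBinom ((r+1)-(k+1)) (k+1))
      = uSum (r+1) - 1 := by
    simp only [qBinom_zero] at hrs
    simp only [pow_zero, Nat.zero_mul, Nat.zero_div, mul_one, one_mul] at hrs
    linear_combination -hrs
  rw [hu1, hu2]
  simp only [qBinom_zero, pow_zero, Nat.zero_mul, Nat.zero_div, mul_one, one_mul, Nat.sub_zero]
  ring

lemma tri3 (k r : ℕ) (h : 2*k ≤ r) :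
    (k+1)*((k+1)+1)/2 + ((r+1)-(2*k+1)) = (r+1) + k*(k-1)/2 := by
  have h1 : (k+1)*((k+1)+1) = k*(k-1) + 2*(2*k+1) := by
    cases k with
    | zero => rfl
    | succ j =>
      have : (j+1) - 1 = j := rfl
      rw [this]
      ring
  obtain ⟨c, hc⟩ : Even (k*(k-1)) := by
    cases k with
    | zero => exact ⟨0, rfl⟩
    | succ j => simpa [Nat.mul_comm] using Nat.even_mul_succ_self j
  omega

lemma claimII (r : ℕ) : uSum (r+2) = uSum (r+1) - Polynomial.X ^ (r+1) * qBinomSum r := by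
  rw [uSum, Finset.sum_range_succ']
  have hsplit : ∀ k ∈ Finset.range (r+2),
      (-1)^(k+1) * Polynomial.X ^ ((k+1)*((k+1)+1)/2) * qBinom ((r+2)-(k+1)) (k+1)
      = -(Polynomial.X ^ (r+1) * ((-1)^k * Polynomial.X ^ (k*(k-1)/2) * qBinom (r-k) k))
        + (-1)^(k+1) * Polynomial.X ^ ((k+1)*((k+1)+1)/2) * qBinom ((r+1)-(k+1)) (k+1) := by
    intro k hk
    have h1 : (r+2)-(k+1) = (r+1)-k := by omega
    rw [h1, pascal2' (r+1) k (by omega), show (r+1)-(k+1) = r - k by omega]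
    rcases le_or_gt (2*k) r with hle | hlt
    · have hx : (Polynomial.X : Polynomial ℤ) ^ ((k+1)*((k+1)+1)/2)
          * Polynomial.X ^ ((r+1)-(2*k+1))
          = Polynomial.X ^ (r+1) * Polynomial.X ^ (k*(k-1)/2) := by
        rw [← pow_add, ← pow_add, tri3 k r hle]
      rw [mul_add]
      linear_combination ((-1 : Polynomial ℤ))^(k+1) * qBinom (r-k) k * hx
    · rw [qBinom_eq_zero (r-k) k (by omega)]
      ring
  rw [Finset.sum_congr rfl hsplit, Finset.sum_add_distrib]
  have hu1 : (∑ k ∈ Finset.range (r+2),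
      -(Polynomial.X ^ (r+1) * ((-1)^k * Polynomial.X ^ (k*(k-1)/2) * qBinom (r-k) k)))
      = -(Polynomial.X ^ (r+1) * qBinomSum r) := by
    rw [Finset.sum_neg_distrib, ← Finset.mul_sum, qBinomSum_ext r (r+2) (by omega)]
  have hrs := Finset.sum_range_succ'
      (fun k => (-1)^k * Polynomial.X ^ (k*(k+1)/2) * qBinom ((r+1)-k) k) (r+2)
  rw [uSum_ext (r+1) (r+3) (by omega)] at hrs
  have hu2 : (∑ k ∈ Finset.range (r+2),
      (-1)^(k+1) * Polynomial.X ^ ((k+1)*((k+1)+1)/2) * qBinom ((r+1)-(k+1)) (k+1))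
      = uSum (r+1) - 1 := by
    simp only [qBinom_zero] at hrs
    simp only [pow_zero, Nat.zero_mul, Nat.zero_div, mul_one, one_mul] at hrs
    linear_combination -hrs
  rw [hu1, hu2]
  simp only [qBinom_zero, pow_zero, Nat.zero_mul, Nat.zero_div, mul_one, one_mul, Nat.sub_zero]
  ring

lemma step3 (n : ℕ) : qBinomSum (n+3) = -(Polynomial.X ^ (n+1)) * qBinomSum n := by
  have h1 := claimI (n+1)
  have h2 := claimII n
  rw [show n+3 = (n+1)+2 from rfl, h1, show n+1+1 = n+2 from rfl, h2]
  ring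

lemma S0 : qBinomSum 0 = 1 := by
  rw [qBinomSum]
  simp [qBinom_zero]

lemma S1 : qBinomSum 1 = 1 := by
  rw [qBinomSum]
  simp [qBinom_zero]

lemma S2 : qBinomSum 2 = 0 := by
  rw [qBinomSum]
  rw [show (2:ℕ)/2 + 1 = 2 from rfl, Finset.sum_range_succ, Finset.sum_range_succ,
    Finset.sum_range_zero]
  rw [show (2:ℕ) - 1 = 1 from rfl, qBinom_succ_succ 0 0, qBinom_zero]
  norm_num [show qBinom 0 1 = (0 : Polynomial ℤ) from rfl, qBinom_zero]

def pentE : ℕ → ℕ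
  | 0 => 0
  | m+1 => pentE m + (3*m+1)

def fE : ℕ → ℕ
  | 0 => 0
  | m+1 => fE m + (3*m+2)

lemma fE_eq : ∀ m, fE m = pentE m + m := by
  intro m
  induction m with
  | zero => rfl
  | succ j ih => rw [fE, pentE, ih]; omega

lemma cf0 : ∀ m, qBinomSum (3*m) = (-1)^m * Polynomial.X ^ (pentE m) := by
  intro m
  induction m with
  | zero => simpa [pentE] using S0
  | succ j ih =>
    rw [show 3*(j+1) = 3*j+3 by ring, step3 (3*j), ih,
      show pentE (j+1) = pentE j + (3*j+1) from rfl, pow_add, pow_succ]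
    ring
lemma cf1 : ∀ m, qBinomSum (3*m+1) = (-1)^m * Polynomial.X ^ (fE m) := by
  intro m
  induction m with
  | zero => simpa [fE] using S1
  | succ j ih =>
    rw [show 3*(j+1)+1 = (3*j+1)+3 by ring, step3 (3*j+1), ih,
      show fE (j+1) = fE j + (3*j+2) from rfl, pow_add, pow_succ]
    ring
lemma cf2 : ∀ m, qBinomSum (3*m+2) = 0 := by
  intro m
  induction m with
  | zero => simpa using S2
  | succ j ih =>
    rw [show 3*(j+1)+2 = (3*j+2)+3 by ring, step3 (3*j+2), ih]
    ring

/-- For every `n ≥ 2`, `S_n = q^{⌊n/3⌋} S_{n-1} - q^{⌊2n/3⌋-1} S_{n-2}` in `ℤ[q]`. -/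
theorem qBinomSum_second_order_recurrence (n : ℕ) (hn : 2 ≤ n) :
    qBinomSum n =
      Polynomial.X ^ (n / 3) * qBinomSum (n - 1)
        - Polynomial.X ^ (2 * n / 3 - 1) * qBinomSum (n - 2) := by
  obtain ⟨m, rfl | rfl | rfl⟩ : ∃ m, n = 3*m ∨ n = 3*m+1 ∨ n = 3*m+2 :=
    ⟨n/3, by omega⟩
  · obtain ⟨r, rfl⟩ : ∃ r, m = r + 1 := ⟨m - 1, by omega⟩
    rw [show 3*(r+1) - 1 = 3*r+2 by omega, show 3*(r+1) - 2 = 3*r+1 by omega,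
      show 3*(r+1)/3 = r+1 by omega, show 2*(3*(r+1))/3 - 1 = 2*r+1 by omega,
      cf0 (r+1), cf2 r, cf1 r, fE_eq r,
      show pentE (r+1) = pentE r + (3*r+1) from rfl]
    rw [pow_add, pow_add, pow_add, pow_succ]
    ring
  · obtain ⟨r, rfl⟩ : ∃ r, m = r + 1 := ⟨m - 1, by omega⟩
    rw [show 3*(r+1)+1 - 1 = 3*(r+1) by omega, show 3*(r+1)+1 - 2 = 3*r+2 by omega,
      show (3*(r+1)+1)/3 = r+1 by omega, show 2*(3*(r+1)+1)/3 - 1 = 2*r+1 by omega,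
      cf1 (r+1), cf0 (r+1), cf2 r, fE_eq (r+1)]
    rw [pow_add]
    ring
  · rw [show 3*m+2 - 1 = 3*m+1 by omega, show 3*m+2 - 2 = 3*m by omega,
      show (3*m+2)/3 = m by omega, show 2*(3*m+2)/3 - 1 = 2*m by omega,
      cf2 m, cf1 m, cf0 m, fE_eq m]
    rw [pow_add, two_mul, pow_add]
    ring
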